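/- arXiv:1511.06251 — 3 statements merged into one kernel-verified Lean document; each statement's English description precedes it below -/
import Mathlib

section
/- Let a, η > 0 with (1-μ)² ≥ 4aη. Then the characteristic polynomial of the matrix A(μ) with rows (0, 0, a/η), (0, -2(1-μ)/η, -2), (-2, 1/η, -(1-μ)/η) has all roots with negative real part whenever 0 ≤ μ < 1. -/
open Matrix Polynomial

/-- Stability of the momentum-SGD moment dynamics: for 0 ≤ μ < 1 (and (1-μ)² ≥ 4aη),
every root of the characteristic polynomial of A(μ) has negative real part. -/
theorem stmt_10 (a η μ : ℝ) (ha : 0 < a) (hη : 0 < η)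
    (hdisc : 4 * a * η ≤ (1 - μ) ^ 2) (hμ0 : 0 ≤ μ) (hμ1 : μ < 1)
    (A : Matrix (Fin 3) (Fin 3) ℝ)
    (hA : A = !![0, 0, a / η; 0, -2 * (1 - μ) / η, -2; -2, 1 / η, -(1 - μ) / η]) :
    ∀ z : ℂ, ((A.map (Complex.ofReal)).charpoly).IsRoot z → z.re < 0 := by
  intro z hz
  by_contra hre
  push_neg at hre
  have h0 : Polynomial.eval z ((A.map Complex.ofReal).charpoly) = 0 := hz
  rw [Matrix.charpoly, Matrix.det_fin_three] at h0
  simp [charmatrix_apply, hA, Matrix.map_apply, Matrix.one_apply] at h0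
  have hη' : (η:ℂ) ≠ 0 := Complex.ofReal_ne_zero.mpr hη.ne'
  field_simp at h0
  have key : (η:ℂ)^2*z^3 + 3*(1-(μ:ℂ))*(η:ℂ)*z^2 + (2*(1-(μ:ℂ))^2+(2+2*(a:ℂ))*(η:ℂ))*z
      + 4*(a:ℂ)*(1-(μ:ℂ)) = 0 := by
    apply mul_left_cancel₀ (pow_ne_zero 3 hη')
    rw [mul_zero]
    linear_combination (η:ℂ)^3 * h0
  rw [Complex.ext_iff] at key
  simp only [Complex.add_re, Complex.add_im, Complex.mul_re, Complex.mul_im, Complex.sub_re,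
    Complex.sub_im, Complex.one_re, Complex.one_im, Complex.ofReal_re, Complex.ofReal_im,
    Complex.zero_re, Complex.zero_im, pow_succ, pow_zero, one_mul,
    Complex.re_ofNat, Complex.im_ofNat] at key
  obtain ⟨h1, h2⟩ := key
  ring_nf at h1 h2
  set x := z.re with hx
  set y := z.im with hy
  have hμ : 0 < 1 - μ := by linarith
  rcases eq_or_ne y 0 with hy0 | hy0
  · -- real root case: the cubic is positive at nonnegative reals
    rw [hy0] at h1
    nlinarith [mul_nonneg (mul_nonneg (sq_nonneg η) hre) (mul_nonneg hre hre),
      mul_nonneg (mul_nonneg hμ.le hη.le) (sq_nonneg x),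
      mul_nonneg (mul_nonneg hη.le hre) ha.le,
      mul_nonneg (mul_nonneg hμ.le hμ.le) hre,
      mul_pos (mul_pos ha hμ) hη, mul_nonneg hη.le hre]
  · -- complex root case
    have hB : 6*(1-μ)*η*x + (2+2*a)*η + 3*η^2*x^2 - η^2*y^2 + 2*(1-μ)^2 = 0 := by
      have h2' : y * (6*(1-μ)*η*x + (2+2*a)*η + 3*η^2*x^2 - η^2*y^2 + 2*(1-μ)^2) = 0 := by
        linear_combination h2
      exact (mul_eq_zero.mp h2').resolve_left hy0
    have final : 8*η^3*x^3 + 24*(1-μ)*η^2*x^2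
        + (2*(2*(1-μ)^2+(2+2*a)*η)+18*(1-μ)^2)*η*x
        + (1-μ)*(6*(1-μ)^2+6*η+2*a*η) = 0 := by
      linear_combination (-η)*h1 + (3*x*η + 3*(1-μ))*hB
    nlinarith [mul_nonneg (mul_nonneg (mul_nonneg hη.le hη.le) hη.le)
        (mul_nonneg (mul_nonneg hre hre) hre),
      mul_nonneg (mul_nonneg hμ.le (mul_nonneg hη.le hη.le)) (sq_nonneg x),
      mul_nonneg (mul_nonneg hμ.le hμ.le) (mul_nonneg hη.le hre),
      mul_nonneg (mul_nonneg hη.le hη.le) (mul_nonneg hre ha.le),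
      mul_nonneg (mul_nonneg hη.le hη.le) hre,
      mul_pos (mul_pos hμ hμ) hμ, mul_pos hμ hη, mul_pos (mul_pos hμ ha) hη]
end

section
/- Asymptotically as μ → 1⁻ with aη fixed and small, for μ ≤ μ_opt = 1 - 2√(aη), the eigenvalue λ(μ) = -((1-μ) - √((1-μ)²-4aη))/η satisfies λ(μ) = -2a/(1-μ) + O(a²η/(1-μ)³). In particular λ(μ) ≤ λ(0) for all μ ∈ [0, μ_opt], i.e. any nonzero momentum improves the descent rate. -/
/-- Asymptotics of the dominant eigenvalue: for μ ≤ μ_opt = 1 - 2√(aη),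
λ(μ) = -((1-μ) - √((1-μ)² - 4aη))/η satisfies λ(μ) = -2a/(1-μ) + O(a²η/(1-μ)³),
and λ(μ) ≤ λ(0) for all μ ∈ [0, μ_opt]: any nonzero momentum improves the descent rate. -/
theorem stmt_11 (a η : ℝ) (ha : 0 < a) (hη : 0 < η) (haη : 4 * a * η < 1)
    (lam : ℝ → ℝ)
    (hlam : ∀ μ : ℝ, lam μ =
      -((1 - μ) - Real.sqrt ((1 - μ) ^ 2 - 4 * a * η)) / η)
    (μopt : ℝ) (hμopt : μopt = 1 - 2 * Real.sqrt (a * η)) :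
    (∃ C > (0 : ℝ), ∀ μ ∈ Set.Icc (0 : ℝ) μopt,
      |lam μ - (-(2 * a) / (1 - μ))| ≤ C * (a ^ 2 * η / (1 - μ) ^ 3)) ∧
    (∀ μ ∈ Set.Icc (0 : ℝ) μopt, lam μ ≤ lam 0) := by
  have haηpos : 0 < a * η := mul_pos ha hη
  have hsqpos : 0 < Real.sqrt (a * η) := Real.sqrt_pos.mpr haηpos
  have hsq2 : (Real.sqrt (a * η)) ^ 2 = a * η := Real.sq_sqrt haηpos.le
  have hsqlt : Real.sqrt (a * η) < 1 / 2 := by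
    nlinarith [Real.sqrt_nonneg (a * η)]
  -- key formula
  have key : ∀ μ : ℝ, 2 * Real.sqrt (a * η) ≤ 1 - μ →
      lam μ = -(4 * a) / ((1 - μ) + Real.sqrt ((1 - μ) ^ 2 - 4 * a * η)) := by
    intro μ hs
    set s := 1 - μ with hsdef
    have hs0 : 0 < s := lt_of_lt_of_le (by positivity) hs
    have hs2 : 4 * a * η ≤ s ^ 2 := by nlinarith
    set D := Real.sqrt (s ^ 2 - 4 * a * η) with hDdef
    have hD0 : 0 ≤ D := Real.sqrt_nonneg _
    have hD2 : D ^ 2 = s ^ 2 - 4 * a * η := Real.sq_sqrt (by linarith)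
    have hden : 0 < s + D := by linarith
    rw [hlam μ]
    rw [div_eq_div_iff hη.ne' hden.ne']
    nlinarith [hD2]
  have hkey0 : lam 0 = -(4 * a) / ((1 - 0) + Real.sqrt ((1 - 0) ^ 2 - 4 * a * η)) :=
    key 0 (by linarith)
  constructor
  · refine ⟨8, by norm_num, ?_⟩
    rintro μ ⟨hμ0, hμ1⟩
    have hs : 2 * Real.sqrt (a * η) ≤ 1 - μ := by
      rw [hμopt] at hμ1; linarith
    set s := 1 - μ with hsdef
    have hs0 : 0 < s := lt_of_lt_of_le (by positivity) hs
    have hs2 : 4 * a * η ≤ s ^ 2 := by nlinarith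
    set D := Real.sqrt (s ^ 2 - 4 * a * η) with hDdef
    have hD0 : 0 ≤ D := Real.sqrt_nonneg _
    have hD2 : D ^ 2 = s ^ 2 - 4 * a * η := Real.sq_sqrt (by linarith)
    have hden : 0 < s + D := by linarith
    have heq : lam μ - (-(2 * a) / s) = -(8 * a ^ 2 * η) / (s * (s + D) ^ 2) := by
      rw [key μ hs, ← hsdef, ← hDdef]
      field_simp
      linear_combination 2 * hD2
    rw [heq, abs_div, abs_neg, abs_of_nonneg (by positivity : (0:ℝ) ≤ 8 * a ^ 2 * η),
      abs_of_pos (by positivity : (0:ℝ) < s * (s + D) ^ 2)]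
    have h8 : (8:ℝ) * (a ^ 2 * η / s ^ 3) = 8 * a ^ 2 * η / s ^ 3 := by ring
    rw [h8]
    gcongr
    nlinarith
  · rintro μ ⟨hμ0, hμ1⟩
    have hs : 2 * Real.sqrt (a * η) ≤ 1 - μ := by
      rw [hμopt] at hμ1; linarith
    set s := 1 - μ with hsdef
    have hs0 : 0 < s := lt_of_lt_of_le (by positivity) hs
    have hs1 : s ≤ 1 := by linarith
    have hs2 : 4 * a * η ≤ s ^ 2 := by nlinarith
    have hDle : Real.sqrt (s ^ 2 - 4 * a * η) ≤ Real.sqrt ((1 - 0) ^ 2 - 4 * a * η) := by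
      apply Real.sqrt_le_sqrt; nlinarith
    have hD0 : 0 ≤ Real.sqrt (s ^ 2 - 4 * a * η) := Real.sqrt_nonneg _
    rw [key μ hs, hkey0]
    rw [neg_div, neg_div, neg_le_neg_iff]
    have hden : 0 < s + Real.sqrt (s ^ 2 - 4 * a * η) := by linarith
    gcongr
end

section
/- Let a, η, Σ > 0 and define Φ(m, μ) = Re λ(μ) · (m - ηΣ/(4(1-μ))) for μ ∈ [0,1), where λ(μ) = -((1-μ) - √((1-μ)²-4aη))/η. For μ ∈ (μ_opt, 1) with μ_opt = max(1-2√(aη),0), the map μ ↦ Φ(m,μ) is increasing; hence argmin_{μ∈[0,1)} Φ(m,μ) ≤ μ_opt. Moreover, if μ > 1 - ηΣ/(4m) and μ ≤ μ_opt then Φ(m,μ) > 0 and Φ is increasing there, so the minimizer satisfies μ* ≤ 1 - ηΣ/(4m). -/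
open Complex

lemma re_sqrt_neg {x : ℝ} (hx : x < 0) : (((x:ℝ):ℂ) ^ (1/2 : ℂ)).re = 0 := by
  rw [Complex.ofReal_cpow_of_nonpos hx.le]
  have hnn : (0:ℝ) ≤ -x := by linarith
  rw [show (-(x:ℂ)) = ((-x : ℝ) : ℂ) by push_cast; ring,
      show ((1/2 : ℂ)) = ((1/2 : ℝ) : ℂ) by norm_num,
      ← Complex.ofReal_cpow hnn]
  have : Complex.exp (↑Real.pi * I * ((1/2:ℝ):ℂ)) = I := by
    rw [show (↑Real.pi * I * ((1/2:ℝ):ℂ)) = (↑(Real.pi/2) * I) by push_cast; ring]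
    simp [Complex.exp_mul_I, Real.cos_pi_div_two, Real.sin_pi_div_two]
  rw [this]
  simp

lemma re_sqrt_nonneg {x : ℝ} (hx : 0 ≤ x) : (((x:ℝ):ℂ) ^ (1/2 : ℂ)).re = Real.sqrt x := by
  rw [show ((1/2 : ℂ)) = ((1/2 : ℝ) : ℂ) by norm_num, ← Complex.ofReal_cpow hx]
  rw [Complex.ofReal_re, ← Real.sqrt_eq_rpow]

/-- HJB minimization for the momentum-parameter control problem. With
Φ(m,μ) = Re λ(μ)·(m - ηΣ/(4(1-μ))): Φ(m,·) is strictly increasing on (μ_opt, 1),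
so any minimizer over [0,1) is ≤ μ_opt; moreover Φ(m,μ) > 0 for
1 - ηΣ/(4m) < μ ≤ μ_opt (μ ≥ 0), and any minimizer is ≤ 1 - ηΣ/(4m). -/
theorem stmt_12 (a η S m : ℝ) (ha : 0 < a) (hη : 0 < η) (hS : 0 < S) (hm : 0 < m)
    (lam : ℝ → ℂ)
    (hlam : ∀ μ : ℝ, lam μ =
      -(((1 - μ : ℝ) : ℂ) - (((1 - μ) ^ 2 - 4 * a * η : ℝ) : ℂ) ^ (1 / 2 : ℂ)) / (η : ℂ))
    (Φ : ℝ → ℝ)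
    (hΦ : ∀ μ : ℝ, Φ μ = (lam μ).re * (m - η * S / (4 * (1 - μ))))
    (μopt : ℝ) (hμopt : μopt = max (1 - 2 * Real.sqrt (a * η)) 0) :
    StrictMonoOn Φ (Set.Ioo μopt 1) ∧
    (∀ μstar ∈ Set.Ico (0 : ℝ) 1, IsMinOn Φ (Set.Ico (0 : ℝ) 1) μstar → μstar ≤ μopt) ∧
    (∀ μ, 0 ≤ μ → 1 - η * S / (4 * m) < μ → μ ≤ μopt → 0 < Φ μ) ∧
    (η * S / (4 * m) ≤ 1 →
      ∀ μstar ∈ Set.Ico (0 : ℝ) 1, IsMinOn Φ (Set.Ico (0 : ℝ) 1) μstar →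
        μstar ≤ 1 - η * S / (4 * m)) := by
  have hsq : Real.sqrt (a*η) ^ 2 = a * η := Real.sq_sqrt (by positivity)
  have hsqpos : 0 < Real.sqrt (a*η) := Real.sqrt_pos.mpr (by positivity)
  have hre : ∀ μ : ℝ, (lam μ).re
      = (-(1-μ) + ((((1-μ)^2 - 4*a*η : ℝ):ℂ) ^ (1/2:ℂ)).re)/η := by
    intro μ
    rw [hlam μ]
    simp [Complex.div_ofReal_re]
    ring
  have hreA : ∀ μ : ℝ, (1-μ)^2 - 4*a*η < 0 → (lam μ).re = -(1-μ)/η := by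
    intro μ h; rw [hre, re_sqrt_neg h]; ring
  have hreB : ∀ μ : ℝ, 0 ≤ (1-μ)^2 - 4*a*η →
      (lam μ).re = (-(1-μ) + Real.sqrt ((1-μ)^2 - 4*a*η))/η := by
    intro μ h; rw [hre, re_sqrt_nonneg h]
  -- value of Φ on (μopt, 1)
  have hΦA : ∀ μ ∈ Set.Ioo μopt (1:ℝ), Φ μ = S/4 - (1-μ)*m/η := by
    intro μ hμ
    have h1 : 0 < 1 - μ := by linarith [hμ.2]
    have hlb : 1 - 2 * Real.sqrt (a*η) < μ :=
      lt_of_le_of_lt (hμopt ▸ le_max_left _ _) hμ.1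
    have hD : (1-μ)^2 - 4*a*η < 0 := by nlinarith
    rw [hΦ, hreA μ hD]
    field_simp
    ring
  have hmono : StrictMonoOn Φ (Set.Ioo μopt 1) := by
    intro x hx y hy hxy
    rw [hΦA x hx, hΦA y hy]
    have : 0 < m/η := by positivity
    have h2 : (1-y)*m/η < (1-x)*m/η := by
      rw [div_lt_div_iff₀ hη hη]; nlinarith [mul_pos hm hη]
    linarith
  have hopt0 : 0 ≤ μopt := hμopt ▸ le_max_right _ _
  have hopt1 : μopt < 1 := by
    rw [hμopt]; apply max_lt ?_ one_pos; nlinarith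
  -- part 2
  have part2 : ∀ μstar ∈ Set.Ico (0 : ℝ) 1, IsMinOn Φ (Set.Ico (0 : ℝ) 1) μstar →
      μstar ≤ μopt := by
    intro μs hμs hmin
    by_contra h
    push_neg at h
    set μ' := (μopt + μs)/2 with hμ'
    have hμ'mem : μ' ∈ Set.Ioo μopt (1:ℝ) := ⟨by simp [hμ']; linarith, by simp [hμ']; linarith [hμs.2]⟩
    have hlt : Φ μ' < Φ μs := hmono hμ'mem ⟨h, hμs.2⟩ (by simp [hμ']; linarith)
    have hge : Φ μs ≤ Φ μ' := isMinOn_iff.mp hmin μ' ⟨by simp [hμ']; linarith, hμ'mem.2⟩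
    linarith
  -- part 3
  have part3 : ∀ μ, 0 ≤ μ → 1 - η * S / (4 * m) < μ → μ ≤ μopt → 0 < Φ μ := by
    intro μ h0 hlow hle
    have h1 : 0 < 1 - μ := by linarith [lt_of_le_of_lt hle hopt1]
    have hml : (1-μ) * (4*m) < η*S :=
      (lt_div_iff₀ (by positivity : (0:ℝ) < 4*m)).mp (by linarith)
    have hfac : m - η*S/(4*(1-μ)) < 0 := by
      rw [sub_neg, lt_div_iff₀ (by positivity : (0:ℝ) < 4*(1-μ))]
      nlinarith
    have hrelt : (lam μ).re < 0 := by
      rcases lt_or_ge ((1-μ)^2 - 4*a*η) 0 with hD | hD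
      · rw [hreA μ hD]
        apply div_neg_of_neg_of_pos (by linarith) hη
      · rw [hreB μ hD]
        apply div_neg_of_neg_of_pos ?_ hη
        have hs : Real.sqrt ((1-μ)^2 - 4*a*η) < 1 - μ := by
          have h2 := Real.sqrt_lt_sqrt hD
            (show (1-μ)^2 - 4*a*η < (1-μ)^2 by nlinarith)
          rwa [Real.sqrt_sq h1.le] at h2
        linarith
    rw [hΦ]
    exact mul_pos_of_neg_of_neg hrelt hfac
  refine ⟨hmono, part2, part3, ?_⟩
  intro hc μs hμs hmin
  by_contra h
  push_neg at h
  have hc0 : 0 ≤ 1 - η*S/(4*m) := by linarith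
  have hc1 : 1 - η*S/(4*m) < 1 := by
    have : 0 < η*S/(4*m) := by positivity
    linarith
  have hpos : 0 < Φ μs := part3 μs hμs.1 h (part2 μs hμs hmin)
  have hΦc : Φ (1 - η*S/(4*m)) = 0 := by
    rw [hΦ]
    have : m - η*S/(4*(1-(1 - η*S/(4*m)))) = 0 := by
      rw [show (1-(1 - η*S/(4*m))) = η*S/(4*m) by ring]
      field_simp
      ring
    rw [this, mul_zero]
  have hge : Φ μs ≤ Φ (1 - η*S/(4*m)) := isMinOn_iff.mp hmin _ ⟨hc0, hc1⟩
  linarith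
end
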